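/- In the (2,3) CC scheme state over ℤ/d, a single player's reduced density matrix is independent of the secret: for the labelled three-qudit graph state with z = (0, 2s, s) on the triangle-type graph of Fig. 3, the partial trace over any two of the three qudits does not depend on s ∈ ℤ/d. -/

import Mathlib

open Matrix Complex

/-- The primitive `d`-th root of unity `ω = exp(2πi/d)`. -/
noncomputable def ω (d : ℕ) : ℂ := Complex.exp (2 * Real.pi * Complex.I / d)

/-- The `n`-qudit graph state `|G⟩ = Π_{i<j} C_{ij}^{A_{ij}} |0̄⟩^{⊗n}` of an adjacency
matrix `A` over `ℤ/d`, written out in the computational basis: since each controlled-`Z`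
power `C_{ij}^{A_{ij}}` is diagonal, the amplitude of `|x⟩` is
`(1/√d)^n · Π_{i<j} ω^{A_{ij} x_i x_j}`. -/
noncomputable def graphVec {n d : ℕ} (A : Fin n → Fin n → ZMod d) :
    (Fin n → ZMod d) → ℂ := fun x =>
  (((Real.sqrt d : ℝ) : ℂ))⁻¹ ^ n *
    ∏ p ∈ Finset.univ.filter (fun p : Fin n × Fin n => p.1 < p.2),
      ω d ^ ((A p.1 p.2).val * ((x p.1).val * (x p.2).val))

/-- The graph-state stabilizer `K_i = X_i Π_j Z_j^{A_{ij}}` as a matrix on `(ℂ^d)^{⊗n}`: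
it first applies the diagonal phase `Π_j Z_j^{A_{ij}}` and then shifts qudit `i` by one. -/
noncomputable def Kop {n d : ℕ} (A : Fin n → Fin n → ZMod d) (i : Fin n) :
    Matrix (Fin n → ZMod d) (Fin n → ZMod d) ℂ :=
  Matrix.of fun x y =>
    if x = Function.update y i (y i + 1)
    then ω d ^ (∑ j, (A i j).val * (y j).val) else 0

/-- The label operator `Z^z = ⊗_i Z_i^{z_i}`, a diagonal matrix with phases
`Π_i ω^{z_i x_i}`. -/
noncomputable def Zmat {n d : ℕ} (z : Fin n → ZMod d) :
    Matrix (Fin n → ZMod d) (Fin n → ZMod d) ℂ :=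
  Matrix.diagonal fun x => ∏ i, ω d ^ ((z i).val * (x i).val)

/-- The adjacency matrix of the (2,3) CC graph: vertex `0` joined to vertices `1` and `2`
by weight-1 edges, vertices `1` and `2` not joined. -/
def A23 (d : ℕ) : Fin 3 → Fin 3 → ZMod d :=
  fun i j => !![0, 1, 1; 1, 0, 0; 1, 0, 0] i j

/-- The (2,3) CC scheme state `|G_s⟩ = Z_2^{2s} Z_3^{s} |G⟩` encoding the secret `s`. -/
noncomputable def ccState (d : ℕ) [NeZero d] (s : ZMod d) : (Fin 3 → ZMod d) → ℂ :=
  Zmat ![0, 2 * s, s] *ᵥ graphVec (A23 d)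

/-- The reduced density matrix of player `i`, i.e. the partial trace of `|G_s⟩⟨G_s|`
over the other two qudits. -/
noncomputable def reducedDensity (d : ℕ) [NeZero d] (s : ZMod d) (i : Fin 3) :
    Matrix (ZMod d) (ZMod d) ℂ :=
  Matrix.of fun a b => ∑ x : Fin 3 → ZMod d,
    if x i = a then ccState d s x * (starRingEnd ℂ) (ccState d s (Function.update x i b))
    else 0

noncomputable def chi (d : ℕ) (t : ZMod d) : ℂ := ω d ^ t.val

section aux
variable {d : ℕ}

lemma omega_pow_d (hd : d ≠ 0) : ω d ^ d = 1 := by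
  simpa [ω] using (Complex.isPrimitiveRoot_exp d hd).pow_eq_one

lemma omega_pow_mod (hd : d ≠ 0) (m : ℕ) : ω d ^ m = ω d ^ (m % d) := by
  conv_lhs => rw [← Nat.mod_add_div m d]
  rw [pow_add, pow_mul, omega_pow_d hd, one_pow, mul_one]

lemma chi_add [NeZero d] (t u : ZMod d) : chi d (t + u) = chi d t * chi d u := by
  rw [chi, chi, chi, ← pow_add, ZMod.val_add, ← omega_pow_mod (NeZero.ne d)]

lemma chi_zero [NeZero d] : chi d 0 = 1 := by simp [chi]

lemma chi_val_mul [NeZero d] (t u : ZMod d) : ω d ^ (t.val * u.val) = chi d (t * u) := by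
  rw [chi, ZMod.val_mul, ← omega_pow_mod (NeZero.ne d)]

lemma conj_omega : (starRingEnd ℂ) (ω d) = (ω d)⁻¹ := by
  rw [ω, ← Complex.exp_conj, ← Complex.exp_neg]
  congr 1
  simp [map_div₀, Complex.conj_I, map_ofNat]
  ring

lemma conj_chi [NeZero d] (t : ZMod d) : (starRingEnd ℂ) (chi d t) = chi d (-t) := by
  have h1 : chi d t * chi d (-t) = 1 := by
    rw [← chi_add]; simp [chi_zero]
  have h2 : (starRingEnd ℂ) (chi d t) = (chi d t)⁻¹ := by
    rw [chi, map_pow, conj_omega, inv_pow]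
  rw [h2]
  exact inv_eq_of_mul_eq_one_right h1

lemma sum_chi [NeZero d] (hd : d.Prime) (c : ZMod d) :
    ∑ x : ZMod d, chi d (c * x) = if c = 0 then (d : ℂ) else 0 := by
  split_ifs with h
  · simp [h, chi_zero, ZMod.card, Finset.card_univ]
  · haveI := Fact.mk hd
    have hb : Function.Bijective (fun x : ZMod d => c * x) := mulLeft_bijective₀ c h
    rw [show (∑ x : ZMod d, chi d (c * x)) = ∑ x : ZMod d, chi d x from
      Fintype.sum_bijective _ hb _ _ (fun x => rfl)]
    have hr : ∑ x : ZMod d, chi d x = ∑ k ∈ Finset.range d, ω d ^ k := by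
      refine Finset.sum_nbij' (fun x => x.val) (fun k => (k : ZMod d)) ?_ ?_ ?_ ?_ ?_
      · intro x _; exact Finset.mem_range.mpr (ZMod.val_lt x)
      · intro k _; exact Finset.mem_univ _
      · intro x _; exact ZMod.natCast_zmod_val x
      · intro k hk; exact ZMod.val_cast_of_lt (Finset.mem_range.mp hk)
      · intro x _; rfl
    rw [hr]
    simpa [ω] using (Complex.isPrimitiveRoot_exp d hd.ne_zero).geom_sum_eq_zero hd.one_lt

def tripleEquiv (d : ℕ) : ZMod d × ZMod d × ZMod d ≃ (Fin 3 → ZMod d) where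
  toFun := fun p => ![p.1, p.2.1, p.2.2]
  invFun := fun x => (x 0, x 1, x 2)
  left_inv := fun p => rfl
  right_inv := fun x => by funext j; fin_cases j <;> rfl

lemma sum_fin3 [NeZero d] (f : (Fin 3 → ZMod d) → ℂ) :
    ∑ x : Fin 3 → ZMod d, f x =
      ∑ x0 : ZMod d, ∑ x1 : ZMod d, ∑ x2 : ZMod d, f ![x0, x1, x2] := by
  rw [← Equiv.sum_comp (tripleEquiv d) f, Fintype.sum_prod_type]
  refine Finset.sum_congr rfl fun x0 _ => ?_
  rw [Fintype.sum_prod_type]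
  rfl

end aux


variable {d : ℕ}

lemma ccState_eq (hd : d.Prime) [NeZero d] (s : ZMod d) (x : Fin 3 → ZMod d) :
    ccState d s x = (((Real.sqrt d : ℝ) : ℂ))⁻¹ ^ 3 *
      (chi d (2 * s * x 1) * chi d (s * x 2) * chi d (x 0 * x 1) * chi d (x 0 * x 2)) := by
  haveI : Fact (1 < d) := ⟨hd.one_lt⟩
  show (Matrix.diagonal _ *ᵥ _) x = _
  rw [Matrix.mulVec_diagonal]
  simp only [graphVec, Finset.prod_filter, Fintype.prod_prod_type, Fin.prod_univ_three,
    A23, Matrix.cons_val_zero, Matrix.cons_val_one, Matrix.head_cons, Matrix.cons_val_two,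
    Matrix.tail_cons, Matrix.of_apply, Matrix.cons_val', Matrix.empty_val',
    Matrix.cons_val_fin_one, Matrix.head_fin_const]
  simp (config := { decide := true }) only [show ¬((0:Fin 3) < 0) by decide,
    show (0:Fin 3) < 1 by decide, show (0:Fin 3) < 2 by decide,
    show ¬((1:Fin 3) < 0) by decide, show ¬((1:Fin 3) < 1) by decide,
    show (1:Fin 3) < 2 by decide, show ¬((2:Fin 3) < 0) by decide,
    show ¬((2:Fin 3) < 1) by decide, show ¬((2:Fin 3) < 2) by decide,
    if_true, if_false]
  simp only [ZMod.val_zero, zero_mul, pow_zero, one_mul, mul_one, ZMod.val_one, chi_val_mul]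
  ring


section entry
variable {d : ℕ}

lemma upd0 (a b c z : ZMod d) : Function.update ![a, b, c] (0 : Fin 3) z = ![z, b, c] := by
  funext j; fin_cases j <;> simp [Function.update]

lemma upd1 (a b c z : ZMod d) : Function.update ![a, b, c] (1 : Fin 3) z = ![a, z, c] := by
  funext j; fin_cases j <;> simp [Function.update]

lemma upd2 (a b c z : ZMod d) : Function.update ![a, b, c] (2 : Fin 3) z = ![a, b, z] := by
  funext j; fin_cases j <;> simp [Function.update]

lemma entry (hd : d.Prime) [NeZero d] (s : ZMod d) (i : Fin 3) (a b : ZMod d) :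
    reducedDensity d s i a b =
      (((Real.sqrt d : ℝ) : ℂ))⁻¹ ^ 6 * (if a = b then (d : ℂ) ^ 2 else 0) := by
  haveI : Fact (1 < d) := ⟨hd.one_lt⟩
  have hcard : (Finset.univ : Finset (ZMod d)).card = d := by simp [ZMod.card]
  have S := sum_chi hd (a - b)
  rw [reducedDensity, Matrix.of_apply, sum_fin3]
  set C6 : ℂ := (((Real.sqrt d : ℝ) : ℂ))⁻¹ ^ 6 with hC6
  fin_cases i
  · -- player 0
    simp only [Fin.zero_eta, Fin.isValue, Matrix.cons_val_zero, upd0,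
      Finset.sum_ite_irrel, Finset.sum_const_zero, Finset.sum_ite_eq',
      Finset.mem_univ, if_true]
    have key : ∀ x1 x2 : ZMod d,
        ccState d s ![a, x1, x2] * (starRingEnd ℂ) (ccState d s ![b, x1, x2]) =
          C6 * (chi d ((a - b) * x1) * chi d ((a - b) * x2)) := by
      intro x1 x2
      rw [ccState_eq hd, ccState_eq hd]
      simp only [Matrix.cons_val_zero, Matrix.cons_val_one, Matrix.head_cons,
        Matrix.cons_val_two, Matrix.tail_cons, _root_.map_mul, map_pow, map_inv₀,
        Complex.conj_ofReal, conj_chi]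
      trans C6 * ((chi d (2 * s * x1) * chi d (-(2 * s * x1))) *
        (chi d (s * x2) * chi d (-(s * x2))) *
        (chi d (a * x1) * chi d (-(b * x1))) * (chi d (a * x2) * chi d (-(b * x2))))
      · rw [hC6]; ring
      · simp only [← chi_add]
        congr 1
        congr 1
        ring
    simp_rw [key]
    have h2 : ∀ x1 : ZMod d,
        ∑ x2 : ZMod d, C6 * (chi d ((a - b) * x1) * chi d ((a - b) * x2)) =
          C6 * chi d ((a - b) * x1) * (if a - b = 0 then (d : ℂ) else 0) := by
      intro x1
      rw [← S, Finset.mul_sum]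
      exact Finset.sum_congr rfl fun _ _ => by ring
    simp_rw [h2]
    rw [← Finset.sum_mul, ← Finset.mul_sum, S]
    rcases eq_or_ne a b with h | h
    · subst h; simp only [sub_self, if_true, if_pos rfl]; ring
    · simp [h, sub_eq_zero]
  · -- player 1
    simp only [Fin.mk_one, Fin.isValue, Matrix.cons_val_one, Matrix.head_cons, Matrix.cons_val_zero, upd1,
      Finset.sum_ite_irrel, Finset.sum_const_zero, Finset.sum_ite_eq',
      Finset.mem_univ, if_true]
    have key : ∀ x0 x2 : ZMod d,
        ccState d s ![x0, a, x2] * (starRingEnd ℂ) (ccState d s ![x0, b, x2]) =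
          C6 * (chi d (2 * s * (a - b)) * chi d ((a - b) * x0)) := by
      intro x0 x2
      rw [ccState_eq hd, ccState_eq hd]
      simp only [Matrix.cons_val_zero, Matrix.cons_val_one, Matrix.head_cons,
        Matrix.cons_val_two, Matrix.tail_cons, _root_.map_mul, map_pow, map_inv₀,
        Complex.conj_ofReal, conj_chi]
      trans C6 * ((chi d (2 * s * a) * chi d (-(2 * s * b))) *
        (chi d (s * x2) * chi d (-(s * x2))) *
        (chi d (x0 * a) * chi d (-(x0 * b))) * (chi d (x0 * x2) * chi d (-(x0 * x2))))
      · rw [hC6]; ring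
      · simp only [← chi_add]
        congr 1
        congr 1
        ring
    simp_rw [key, Finset.sum_const, hcard, nsmul_eq_mul]
    trans ((d : ℂ) * C6 * chi d (2 * s * (a - b))) * ∑ x0 : ZMod d, chi d ((a - b) * x0)
    · rw [Finset.mul_sum]
      exact Finset.sum_congr rfl fun _ _ => by ring
    · rw [S]
      rcases eq_or_ne a b with h | h
      · subst h
        simp only [sub_self, mul_zero, chi_zero, if_true, if_pos rfl]
        ring
      · simp [h, sub_eq_zero]
  · -- player 2
    simp only [Fin.reduceFinMk, Fin.isValue, Matrix.cons_val_two, Matrix.tail_cons,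
      Matrix.head_cons, upd2,
      Finset.sum_ite_irrel, Finset.sum_const_zero, Finset.sum_ite_eq',
      Finset.mem_univ, if_true]
    have key : ∀ x0 x1 : ZMod d,
        ccState d s ![x0, x1, a] * (starRingEnd ℂ) (ccState d s ![x0, x1, b]) =
          C6 * (chi d (s * (a - b)) * chi d ((a - b) * x0)) := by
      intro x0 x1
      rw [ccState_eq hd, ccState_eq hd]
      simp only [Matrix.cons_val_zero, Matrix.cons_val_one, Matrix.head_cons,
        Matrix.cons_val_two, Matrix.tail_cons, _root_.map_mul, map_pow, map_inv₀,
        Complex.conj_ofReal, conj_chi]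
      trans C6 * ((chi d (2 * s * x1) * chi d (-(2 * s * x1))) *
        (chi d (s * a) * chi d (-(s * b))) *
        (chi d (x0 * x1) * chi d (-(x0 * x1))) * (chi d (x0 * a) * chi d (-(x0 * b))))
      · rw [hC6]; ring
      · simp only [← chi_add]
        congr 1
        congr 1
        ring
    simp_rw [key, Finset.sum_const, hcard, nsmul_eq_mul]
    trans ((d : ℂ) * C6 * chi d (s * (a - b))) * ∑ x0 : ZMod d, chi d ((a - b) * x0)
    · rw [Finset.mul_sum]
      exact Finset.sum_congr rfl fun _ _ => by ring
    · rw [S]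
      rcases eq_or_ne a b with h | h
      · subst h
        simp only [sub_self, mul_zero, chi_zero, if_true, if_pos rfl]
        ring
      · simp [h, sub_eq_zero]

end entry


/-- in the (2,3) CC scheme, each single player's reduced density matrix
(the partial trace over the other two qudits) is independent of the secret `s`. -/
theorem cc23_single_player_independent (d : ℕ) [NeZero d] (hd : d.Prime) :
    ∀ s s' : ZMod d, ∀ i : Fin 3,
      reducedDensity d s i = reducedDensity d s' i := by
  intro s s' i
  ext a b
  rw [entry hd, entry hd]
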